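/- Let A be a Banach algebra, U a Banach A-bimodule, and let δ₁ : A → A, δ₂ : A → U, τ₁ : U → A, τ₂ : U → U be linear maps such that: δ₁ and δ₂ are derivations; τ₂(a·u) = a·τ₂(u) + δ₂(a)·u and τ₂(u·a) = τ₂(u)·a + u·δ₂(a) for all a ∈ A, u ∈ U; τ₁(a·u) = a·τ₁(u), τ₁(u·a) = τ₁(u)·a, and u·τ₁(v) + τ₁(u)·v = 0 for all a ∈ A, u, v ∈ U. Then the linear map D : T(A,U) → T(A,U) defined by D((a,u)) = (δ₁(a)+τ₁(u), δ₂(a)+τ₂(u)) is a derivation on T(A,U). -/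

import Mathlib

/-- Multiplication of the module extension (trivial extension) algebra `T(A,U) = A × U`:
`(a,u)(b,v) = (ab, a·v + u·b)`. Here `l` and `r` are the (continuous bilinear) left and right
actions of the Banach algebra `A` on the Banach `A`-bimodule `U`, and the ℓ¹-norm on `A × U`
induces the product topology. -/
noncomputable def trivMul {A U : Type*} [NonUnitalNormedRing A] [NormedSpace ℂ A]
    [NormedAddCommGroup U] [NormedSpace ℂ U]
    (l : A →L[ℂ] U →L[ℂ] U) (r : U →L[ℂ] A →L[ℂ] U) (x y : A × U) : A × U :=
  (x.1 * y.1, l x.1 y.2 + r x.2 y.1)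

theorem stmt1
    {A U : Type*}
    [NonUnitalNormedRing A] [NormedSpace ℂ A] [IsScalarTower ℂ A A] [SMulCommClass ℂ A A]
    [CompleteSpace A]
    [NormedAddCommGroup U] [NormedSpace ℂ U] [CompleteSpace U]
    (l : A →L[ℂ] U →L[ℂ] U) (r : U →L[ℂ] A →L[ℂ] U)
    (hl : ∀ (a b : A) (u : U), l (a * b) u = l a (l b u))
    (hr : ∀ (u : U) (a b : A), r u (a * b) = r (r u a) b)
    (hlr : ∀ (a : A) (u : U) (b : A), r (l a u) b = l a (r u b))
    (δ₁ : A →ₗ[ℂ] A) (δ₂ : A →ₗ[ℂ] U) (τ₁ : U →ₗ[ℂ] A) (τ₂ : U →ₗ[ℂ] U)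
    -- `δ₁` and `δ₂` are derivations:
    (hδ₁ : ∀ a b : A, δ₁ (a * b) = a * δ₁ b + δ₁ a * b)
    (hδ₂ : ∀ a b : A, δ₂ (a * b) = l a (δ₂ b) + r (δ₂ a) b)
    -- `τ₂(a·u) = a·τ₂(u) + δ₁(a)·u` and `τ₂(u·a) = τ₂(u)·a + u·δ₁(a)`
    -- (the paper writes `δ₂(a)·u`, which is ill-typed; `δ₁` is the forced reading):
    (hτ₂l : ∀ (a : A) (u : U), τ₂ (l a u) = l a (τ₂ u) + l (δ₁ a) u)
    (hτ₂r : ∀ (a : A) (u : U), τ₂ (r u a) = r (τ₂ u) a + r u (δ₁ a))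
    -- `τ₁` is an `A`-bimodule homomorphism with `u·τ₁(v) + τ₁(u)·v = 0`:
    (hτ₁l : ∀ (a : A) (u : U), τ₁ (l a u) = a * τ₁ u)
    (hτ₁r : ∀ (a : A) (u : U), τ₁ (r u a) = τ₁ u * a)
    (hτ₁0 : ∀ u v : U, r u (τ₁ v) + l (τ₁ u) v = 0)
    -- the linear map `D((a,u)) = (δ₁(a)+τ₁(u), δ₂(a)+τ₂(u))`:
    (D : (A × U) →ₗ[ℂ] (A × U))
    (hD : ∀ (a : A) (u : U), D (a, u) = (δ₁ a + τ₁ u, δ₂ a + τ₂ u)) :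
    -- `D` is a derivation on `T(A,U)`:
    ∀ x y : A × U, D (trivMul l r x y) = trivMul l r x (D y) + trivMul l r (D x) y := by
  rintro ⟨a, u⟩ ⟨b, v⟩
  simp only [trivMul, hD, Prod.mk_add_mk, Prod.mk.injEq, map_add, hδ₁, hδ₂, hτ₂l, hτ₂r,
    hτ₁l, hτ₁r]
  constructor
  · rw [mul_add, add_mul]; abel
  · have h0 : l (τ₁ u) v = -(r u (τ₁ v)) := eq_neg_of_add_eq_zero_right (hτ₁0 u v)
    simp only [map_add, ContinuousLinearMap.add_apply, h0]
    abel
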